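/- For any extreme sets X and Y with X ∩ Y nonempty, X ∩ Y is a Steiner cut. -/
import Mathlib


variable {V : Type*}

def IsSteinerCut (T X : Set V) : Prop := (X ∩ T).Nonempty ∧ ¬ T ⊆ X

def SteinerExtreme (d : Set V → ℝ) (T X : Set V) : Prop :=
  IsSteinerCut T X ∧ ∀ Y, IsSteinerCut T Y → Y ⊂ X → d X < d Y

/-- For extreme sets `X` and `Y` with nonempty intersection, `X ∩ Y` is a Steiner cut. -/
theorem extreme_inter_steinerCut [Fintype V] (d : Set V → ℝ) (T X Y : Set V)
    (hpos : ∀ A B : Set V, d (A \ B) + d (B \ A) ≤ d A + d B)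
    (hX : SteinerExtreme d T X) (hY : SteinerExtreme d T Y) (hne : (X ∩ Y).Nonempty) :
    IsSteinerCut T (X ∩ Y) := by
  obtain ⟨⟨hXT, hXns⟩, hXext⟩ := hX
  obtain ⟨⟨hYT, hYns⟩, hYext⟩ := hY
  refine ⟨?_, fun h => hXns (h.trans Set.inter_subset_left)⟩
  by_contra hempty
  rw [Set.not_nonempty_iff_eq_empty] at hempty
  -- X ∩ T ⊆ X \ Y
  have hXT' : X ∩ T ⊆ X \ Y := by
    intro v ⟨hvX, hvT⟩
    refine ⟨hvX, fun hvY => ?_⟩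
    have : v ∈ (X ∩ Y) ∩ T := ⟨⟨hvX, hvY⟩, hvT⟩
    simp [hempty] at this
  have hYT' : Y ∩ T ⊆ Y \ X := by
    intro v ⟨hvY, hvT⟩
    refine ⟨hvY, fun hvX => ?_⟩
    have : v ∈ (X ∩ Y) ∩ T := ⟨⟨hvX, hvY⟩, hvT⟩
    simp [hempty] at this
  have hscX : IsSteinerCut T (X \ Y) := by
    refine ⟨hXT.imp fun v hv => ⟨hXT' hv, hv.2⟩, fun h => hXns (h.trans Set.diff_subset)⟩
  have hscY : IsSteinerCut T (Y \ X) := by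
    refine ⟨hYT.imp fun v hv => ⟨hYT' hv, hv.2⟩, fun h => hYns (h.trans Set.diff_subset)⟩
  obtain ⟨w, hwX, hwY⟩ := hne
  have h1 : d X < d (X \ Y) :=
    hXext _ hscX ⟨Set.diff_subset, fun h => ((h hwX).2 hwY)⟩
  have h2 : d Y < d (Y \ X) :=
    hYext _ hscY ⟨Set.diff_subset, fun h => ((h hwY).2 hwX)⟩
  have := hpos X Y
  linarith
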